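/- Let f : X → ℝ be a set function (on subsets of a finite set X) that takes only the values a and 0, where a > 0, of the form f(S) = a · Π_{j ∈ I} 1[j ∉ S] for a fixed subset I ⊆ X. Then any nonnegative linear combination of such functions (with possibly different constants a and subsets I) is non-increasing and supermodular, and consequently g(S) = F(∅) − F(S), where F is such a combination composed with a convex non-decreasing real function, is non-decreasing and submodular. -/

import Mathlib

variable {X : Type*} [Fintype X] [DecidableEq X]

/-- A nonnegative combination of "avoidance indicator" set functions
`S ↦ Σ_m a_m · Π_{j ∈ I_m} 1[j ∉ S]`. -/
def avoidComb {ι : Type*} (M : Finset ι) (a : ι → ℝ) (I : ι → Finset X)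
    (S : Finset X) : ℝ :=
  ∑ m ∈ M, a m * ∏ j ∈ I m, (if j ∈ S then (0:ℝ) else 1)

lemma prod_ind (I S : Finset X) :
    (∏ j ∈ I, (if j ∈ S then (0:ℝ) else 1)) = if ∀ j ∈ I, j ∉ S then 1 else 0 := by
  by_cases h : ∀ j ∈ I, j ∉ S
  · rw [if_pos h]
    exact Finset.prod_eq_one fun j hj => by simp [h j hj]
  · rw [if_neg h]
    push_neg at h
    obtain ⟨j, hj, hjS⟩ := h
    exact Finset.prod_eq_zero hj (by simp [hjS])

lemma convex_cross {f : ℝ → ℝ} (hc : ConvexOn ℝ Set.univ f) (hm : Monotone f)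
    {w x y z : ℝ} (hwx : w ≤ x) (hxz : x ≤ z) (hyz : y ≤ z) (hsum : x + y ≤ w + z) :
    f x + f y ≤ f w + f z := by
  have hy' : f y ≤ f (w + z - x) := hm (by linarith)
  rcases eq_or_lt_of_le (hwx.trans hxz) with h | h
  · have hx : x = w := le_antisymm (h ▸ hxz) hwx
    have h1 : f y ≤ f z := hm hyz
    have h2 : f x = f w := by rw [hx]
    linarith
  · set t : ℝ := (z - x) / (z - w) with ht
    set s : ℝ := (x - w) / (z - w) with hs
    have hzw : (0:ℝ) < z - w := by linarith
    have ht0 : 0 ≤ t := div_nonneg (by linarith) hzw.le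
    have hs0 : 0 ≤ s := div_nonneg (by linarith) hzw.le
    have hne : z - w ≠ 0 := hzw.ne'
    have hts : t + s = 1 := by
      rw [ht, hs, ← add_div]
      rw [show z - x + (x - w) = z - w by ring, div_self hne]
    have hx1 : t • w + s • z = x := by
      rw [smul_eq_mul, smul_eq_mul, ht, hs]; field_simp; ring
    have hx2 : s • w + t • z = w + z - x := by
      rw [smul_eq_mul, smul_eq_mul, ht, hs]; field_simp; ring
    have h1 := hc.2 (Set.mem_univ w) (Set.mem_univ z) ht0 hs0 hts
    have h2 := hc.2 (Set.mem_univ w) (Set.mem_univ z) hs0 ht0 (by linarith)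
    rw [hx1] at h1
    rw [hx2] at h2
    simp only [smul_eq_mul] at h1 h2
    have key : t * f w + s * f z + (s * f w + t * f z) = f w + f z := by
      have hs1 : s = 1 - t := by linarith
      rw [hs1]; ring
    linarith

/-- A nonnegative linear combination of avoidance-indicator set functions is
non-increasing and supermodular; consequently, for a convex non-decreasing `f`, the gain
`g(S) = f(F(∅)) − f(F(S))` (with `F = f ∘` the combination) is non-decreasing and submodular. -/
theorem avoidComb_antitone_supermodular_gain
    {ι : Type*} (M : Finset ι) (a : ι → ℝ) (ha : ∀ m ∈ M, 0 ≤ a m)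
    (I : ι → Finset X) (f : ℝ → ℝ)
    (hf_conv : ConvexOn ℝ Set.univ f) (hf_mono : Monotone f) :
    -- the combination is non-increasing
    (∀ A B : Finset X, A ⊆ B → avoidComb M a I B ≤ avoidComb M a I A) ∧
    -- the combination is supermodular
    (∀ A B : Finset X,
      avoidComb M a I A + avoidComb M a I B ≤
        avoidComb M a I (A ∪ B) + avoidComb M a I (A ∩ B)) ∧
    -- the gain is non-decreasing
    (∀ A B : Finset X, A ⊆ B →
      f (avoidComb M a I ∅) - f (avoidComb M a I A) ≤
        f (avoidComb M a I ∅) - f (avoidComb M a I B)) ∧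
    -- the gain is submodular
    (∀ A B : Finset X,
      (f (avoidComb M a I ∅) - f (avoidComb M a I (A ∪ B))) +
        (f (avoidComb M a I ∅) - f (avoidComb M a I (A ∩ B))) ≤
      (f (avoidComb M a I ∅) - f (avoidComb M a I A)) +
        (f (avoidComb M a I ∅) - f (avoidComb M a I B))) := by
  have hanti : ∀ A B : Finset X, A ⊆ B → avoidComb M a I B ≤ avoidComb M a I A := by
    intro A B hAB
    refine Finset.sum_le_sum fun m hm => ?_
    rw [prod_ind, prod_ind]
    refine mul_le_mul_of_nonneg_left ?_ (ha m hm)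
    by_cases hB : ∀ j ∈ I m, j ∉ B
    · have hA : ∀ j ∈ I m, j ∉ A := fun j hj hjA => hB j hj (hAB hjA)
      rw [if_pos hA, if_pos hB]
    · simp only [if_neg hB]
      split <;> norm_num
  have hsuper : ∀ A B : Finset X,
      avoidComb M a I A + avoidComb M a I B ≤
        avoidComb M a I (A ∪ B) + avoidComb M a I (A ∩ B) := by
    intro A B
    unfold avoidComb
    rw [← Finset.sum_add_distrib, ← Finset.sum_add_distrib]
    refine Finset.sum_le_sum fun m hm => ?_
    rw [← mul_add, ← mul_add]
    refine mul_le_mul_of_nonneg_left ?_ (ha m hm)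
    simp only [prod_ind]
    by_cases hA : ∀ j ∈ I m, j ∉ A <;> by_cases hB : ∀ j ∈ I m, j ∉ B
    · have hU : ∀ j ∈ I m, j ∉ A ∪ B := by
        intro j hj; simp [Finset.mem_union, hA j hj, hB j hj]
      have hI : ∀ j ∈ I m, j ∉ A ∩ B := by
        intro j hj; simp [Finset.mem_inter, hA j hj]
      rw [if_pos hA, if_pos hB, if_pos hU, if_pos hI]
    · have hU : ¬ ∀ j ∈ I m, j ∉ A ∪ B := by
        intro h; exact hB fun j hj hjB => h j hj (Finset.mem_union_right _ hjB)
      have hI : ∀ j ∈ I m, j ∉ A ∩ B := by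
        intro j hj; simp [Finset.mem_inter, hA j hj]
      rw [if_pos hA, if_neg hB, if_neg hU, if_pos hI]
      norm_num
    · have hU : ¬ ∀ j ∈ I m, j ∉ A ∪ B := by
        intro h; exact hA fun j hj hjA => h j hj (Finset.mem_union_left _ hjA)
      have hI : ∀ j ∈ I m, j ∉ A ∩ B := by
        intro j hj hjI; exact hB j hj (Finset.mem_inter.mp hjI).2
      rw [if_neg hA, if_pos hB, if_neg hU, if_pos hI]
    · have hU : ¬ ∀ j ∈ I m, j ∉ A ∪ B := by
        intro h; exact hA fun j hj hjA => h j hj (Finset.mem_union_left _ hjA)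
      rw [if_neg hA, if_neg hB, if_neg hU]
      split <;> norm_num
  refine ⟨hanti, hsuper, ?_, ?_⟩
  · intro A B hAB
    have := hf_mono (hanti A B hAB)
    linarith
  · intro A B
    have h1 := hanti A (A ∪ B) Finset.subset_union_left
    have h2 := hanti B (A ∪ B) Finset.subset_union_right
    have h3 := hanti (A ∩ B) A Finset.inter_subset_left
    have h4 := hanti (A ∩ B) B Finset.inter_subset_right
    have h5 := hsuper A B
    have := convex_cross hf_conv hf_mono h1 h3 h4 (by linarith)
    linarith
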